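/- Let ω ∈ ℝ^n, let F¹_j ∈ C¹(𝕋^n) and R²_j be continuous bounded functions on 𝕋^n × [-ε₀,ε₀] (for j = 1,…,n), and let φ(t) solve φ̇_j = ω_j + ε F¹_j(φ) + ε² R²_j(φ, ε) with |ε| ≤ ε₀. Then for all T ≥ 0, φ_j(T) - φ_j(0) - ω_j T = ε ∫₀ᵀ F¹_j(φ(0) + ωt) dt + r_j(T,ε), where |r_j(T,ε)| ≤ A_j ε² T² + B_j ε² T with A_j = (1/2) ∑_{i=1}^n ‖∂_i F¹_j‖₀ ‖F¹_i + ε R²_i‖₀ and B_j = ‖R²_j‖₀. -/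

import Mathlib

open Finset

/-- Directional derivative bound from coordinate bounds. -/
lemma aux_fderiv_bound {n : ℕ} (f : (Fin n → ℝ) → ℝ) (hf : Differentiable ℝ f)
    (dF : Fin n → ℝ) (hdF : ∀ i x, |fderiv ℝ f x (Pi.single i 1)| ≤ dF i)
    (v w : Fin n → ℝ) : |fderiv ℝ f v w| ≤ ∑ i, dF i * |w i| := by
  have hw : w = ∑ i, w i • (Pi.single i 1 : Fin n → ℝ) := by
    funext k
    simp [Finset.sum_apply, Pi.single_apply]
  calc |fderiv ℝ f v w| = |∑ i, w i * fderiv ℝ f v (Pi.single i 1)| := by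
        conv_lhs => rw [hw]
        rw [map_sum]
        simp [map_smul, smul_eq_mul]
    _ ≤ ∑ i, |w i * fderiv ℝ f v (Pi.single i 1)| := Finset.abs_sum_le_sum_abs _ _
    _ ≤ ∑ i, dF i * |w i| := by
        refine Finset.sum_le_sum fun i _ => ?_
        rw [abs_mul, mul_comm]
        exact mul_le_mul_of_nonneg_right (hdF i v) (abs_nonneg _)

/-- Mean value estimate with coordinatewise derivative bounds. -/
lemma aux_mvt {n : ℕ} (f : (Fin n → ℝ) → ℝ) (hf : ContDiff ℝ 1 f)
    (dF : Fin n → ℝ) (hdF : ∀ i x, |fderiv ℝ f x (Pi.single i 1)| ≤ dF i)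
    (x y : Fin n → ℝ) : |f x - f y| ≤ ∑ i, dF i * |x i - y i| := by
  have hdiff : Differentiable ℝ f := hf.differentiable one_ne_zero
  set h : ℝ → ℝ := fun s => f (y + s • (x - y)) with hh
  have hder : ∀ s : ℝ, HasDerivAt h (fderiv ℝ f (y + s • (x - y)) (x - y)) s := by
    intro s
    have hinner : HasDerivAt (fun s : ℝ => y + s • (x - y)) (x - y) s := by
      simpa using ((hasDerivAt_id s).smul_const (x - y)).const_add y
    exact (hdiff (y + s • (x - y))).hasFDerivAt.comp_hasDerivAt s hinner
  have hbound : ∀ s ∈ (Set.univ : Set ℝ),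
      ‖fderiv ℝ f (y + s • (x - y)) (x - y)‖ ≤ ∑ i, dF i * |x i - y i| := by
    intro s _
    rw [Real.norm_eq_abs]
    simpa using aux_fderiv_bound f hdiff dF hdF (y + s • (x - y)) (x - y)
  have := convex_univ.norm_image_sub_le_of_norm_hasDerivWithin_le
    (f := h) (fun s _ => (hder s).hasDerivWithinAt) hbound (Set.mem_univ (0:ℝ))
    (Set.mem_univ (1:ℝ))
  simp only [hh, one_smul, zero_smul, add_zero] at this
  have h1 : y + (x - y) = x := by abel
  rw [h1] at this
  simpa [Real.norm_eq_abs] using this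


/-- Picard-type estimate (Lemma 4.1): a solution of
`φ̇_j = ω_j + ε F¹_j(φ) + ε² R²_j(φ, ε)` satisfies
`φ_j(T) - φ_j(0) - ω_j T = ε ∫₀ᵀ F¹_j(φ(0) + ωt) dt + r_j(T,ε)` with
`|r_j(T,ε)| ≤ A_j ε² T² + B_j ε² T`, where
`A_j = (1/2) ∑_i ‖∂_i F¹_j‖₀ ‖F¹_i + ε R²_i‖₀` and `B_j = ‖R²_j‖₀`
(formulated with uniform bounds `dF i`, `MR i`, `Bj` for the respective sup norms). -/
theorem stmt_9 (n : ℕ) (ε₀ ε : ℝ) (hε : |ε| ≤ ε₀)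
    (ω : Fin n → ℝ)
    (F1 : Fin n → (Fin n → ℝ) → ℝ)
    (R2 : Fin n → (Fin n → ℝ) → ℝ → ℝ)
    (hF1 : ∀ i, ContDiff ℝ 1 (F1 i))
    (hR2 : ∀ i, Continuous (fun p : (Fin n → ℝ) × ℝ => R2 i p.1 p.2))
    (j : Fin n)
    (dF : Fin n → ℝ) (MR : Fin n → ℝ) (Bj : ℝ)
    -- `dF i` bounds `‖∂_i F¹_j‖₀`:
    (hdF : ∀ i x, |fderiv ℝ (F1 j) x (Pi.single i 1)| ≤ dF i) (hdF0 : ∀ i, 0 ≤ dF i)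
    -- `MR i` bounds `‖F¹_i + ε R²_i‖₀`:
    (hMR : ∀ i x, |F1 i x + ε * R2 i x ε| ≤ MR i) (hMR0 : ∀ i, 0 ≤ MR i)
    -- `Bj` bounds `‖R²_j‖₀`:
    (hBj : ∀ x e, |e| ≤ ε₀ → |R2 j x e| ≤ Bj)
    (φ : ℝ → Fin n → ℝ)
    (hφ : ∀ (i : Fin n) (t : ℝ),
      HasDerivAt (fun s => φ s i) (ω i + ε * F1 i (φ t) + ε ^ 2 * R2 i (φ t) ε) t) :
    ∀ T : ℝ, 0 ≤ T →
      |φ T j - φ 0 j - ω j * T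
          - ε * ∫ t in (0:ℝ)..T, F1 j (fun i => φ 0 i + ω i * t)|
        ≤ ((1:ℝ)/2 * ∑ i, dF i * MR i) * ε ^ 2 * T ^ 2 + Bj * ε ^ 2 * T := by
  intro T hT
  set ψ : ℝ → Fin n → ℝ := fun t i => φ 0 i + ω i * t with hψ
  set S : ℝ := ∑ i, dF i * MR i with hS
  -- continuity facts
  have hφc : Continuous φ := by
    refine continuous_pi fun i => ?_
    exact continuous_iff_continuousAt.2 fun t => (hφ i t).continuousAt
  have hψc : Continuous ψ := by
    refine continuous_pi fun i => ?_
    exact continuous_const.add (continuous_const.mul continuous_id)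
  have hF1c : ∀ i, Continuous (F1 i) := fun i => (hF1 i).continuous
  have hR2c : Continuous (fun t => R2 j (φ t) ε) :=
    (hR2 j).comp (hφc.prodMk continuous_const)
  -- step 1: bound on |φ t i - ψ t i|
  have step1 : ∀ (i : Fin n) (t : ℝ), |φ t i - ψ t i| ≤ |ε| * MR i * |t| := by
    intro i t
    set g : ℝ → ℝ := fun s => φ s i - φ 0 i - ω i * s with hg
    have hgder : ∀ s : ℝ, HasDerivAt g (ε * (F1 i (φ s) + ε * R2 i (φ s) ε)) s := by
      intro s
      have h1 : HasDerivAt g (ω i + ε * F1 i (φ s) + ε ^ 2 * R2 i (φ s) ε - ω i * 1) s :=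
        ((hφ i s).sub_const (φ 0 i)).sub ((hasDerivAt_id s).const_mul (ω i))
      convert h1 using 1
      ring
    have hbound : ∀ s ∈ (Set.univ : Set ℝ),
        ‖ε * (F1 i (φ s) + ε * R2 i (φ s) ε)‖ ≤ |ε| * MR i := by
      intro s _
      rw [Real.norm_eq_abs, abs_mul]
      exact mul_le_mul_of_nonneg_left (hMR i (φ s)) (abs_nonneg _)
    have := convex_univ.norm_image_sub_le_of_norm_hasDerivWithin_le
      (f := g) (f' := fun s => ε * (F1 i (φ s) + ε * R2 i (φ s) ε))
      (fun s _ => (hgder s).hasDerivWithinAt) hbound (Set.mem_univ (0:ℝ))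
      (Set.mem_univ t)
    have hg0 : g 0 = 0 := by simp [hg]
    rw [hg0, sub_zero, sub_zero, Real.norm_eq_abs, Real.norm_eq_abs] at this
    have : |g t| ≤ |ε| * MR i * |t| := this
    simpa [hg, hψ, sub_sub] using this
  -- pointwise bound on the difference integrand
  set d : ℝ → ℝ := fun t => ε * (F1 j (φ t) - F1 j (ψ t)) + ε ^ 2 * R2 j (φ t) ε
    with hd
  have hdc : Continuous d := by
    apply Continuous.add
    · exact continuous_const.mul (((hF1c j).comp hφc).sub ((hF1c j).comp hψc))
    · exact continuous_const.mul hR2c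
  have hdbound : ∀ t ∈ Set.Icc (0:ℝ) T, |d t| ≤ ε ^ 2 * S * t + ε ^ 2 * Bj := by
    intro t ht
    have ht0 : 0 ≤ t := ht.1
    have h1 : |F1 j (φ t) - F1 j (ψ t)| ≤ ∑ i, dF i * (|ε| * MR i * |t|) := by
      refine le_trans (aux_mvt (F1 j) (hF1 j) dF hdF (φ t) (ψ t)) ?_
      refine Finset.sum_le_sum fun i _ => ?_
      exact mul_le_mul_of_nonneg_left (step1 i t) (hdF0 i)
    have h2 : ∑ i, dF i * (|ε| * MR i * |t|) = |ε| * |t| * S := by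
      rw [hS, Finset.mul_sum]
      exact Finset.sum_congr rfl fun i _ => by ring
    calc |d t| ≤ |ε * (F1 j (φ t) - F1 j (ψ t))| + |ε ^ 2 * R2 j (φ t) ε| :=
          abs_add_le _ _
      _ ≤ |ε| * (|ε| * |t| * S) + ε ^ 2 * Bj := by
          gcongr
          · rw [abs_mul]
            exact mul_le_mul_of_nonneg_left (h2 ▸ h1) (abs_nonneg _)
          · rw [abs_mul, abs_pow, sq_abs]
            exact mul_le_mul_of_nonneg_left (hBj (φ t) ε hε) (sq_nonneg _)
      _ = ε ^ 2 * S * t + ε ^ 2 * Bj := by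
          rw [abs_of_nonneg ht0, ← sq_abs ε]; ring
  -- FTC
  have hcont : Continuous (fun t => ω j + ε * F1 j (φ t) + ε ^ 2 * R2 j (φ t) ε) := by
    exact (continuous_const.add (continuous_const.mul ((hF1c j).comp hφc))).add
      (continuous_const.mul hR2c)
  have key : ∫ t in (0:ℝ)..T, (ω j + ε * F1 j (φ t) + ε ^ 2 * R2 j (φ t) ε)
      = φ T j - φ 0 j :=
    intervalIntegral.integral_eq_sub_of_hasDerivAt (fun t _ => hφ j t)
      (hcont.intervalIntegrable 0 T)
  have hsplit : ∫ t in (0:ℝ)..T, (ω j + ε * F1 j (φ t) + ε ^ 2 * R2 j (φ t) ε)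
      = (∫ t in (0:ℝ)..T, d t) + (ω j * T + ε * ∫ t in (0:ℝ)..T, F1 j (ψ t)) := by
    have heq : (fun t => ω j + ε * F1 j (φ t) + ε ^ 2 * R2 j (φ t) ε)
        = fun t => d t + (ω j + ε * F1 j (ψ t)) := by
      funext t; simp only [hd]; ring
    have hcψ : Continuous fun t => F1 j (ψ t) := (hF1c j).comp hψc
    have hc2 : Continuous fun t => ε * F1 j (ψ t) := continuous_const.mul hcψ
    have hc1 : Continuous fun t => ω j + ε * F1 j (ψ t) := continuous_const.add hc2
    rw [heq, intervalIntegral.integral_add (hdc.intervalIntegrable 0 T)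
      (hc1.intervalIntegrable 0 T),
      intervalIntegral.integral_add (intervalIntegrable_const)
      (hc2.intervalIntegrable 0 T),
      intervalIntegral.integral_const, intervalIntegral.integral_const_mul]
    simp [smul_eq_mul]
    ring
  have hrep : φ T j - φ 0 j - ω j * T
      - ε * ∫ t in (0:ℝ)..T, F1 j (fun i => φ 0 i + ω i * t)
      = ∫ t in (0:ℝ)..T, d t := by
    have : (fun t => F1 j (fun i => φ 0 i + ω i * t)) = fun t => F1 j (ψ t) := rfl
    rw [this, ← key, hsplit]; ring
  rw [hrep]
  have habs : |∫ t in (0:ℝ)..T, d t| ≤ ∫ t in (0:ℝ)..T, |d t| := by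
    simpa [Real.norm_eq_abs] using
      intervalIntegral.norm_integral_le_integral_norm (f := d) (a := 0) (b := T) hT
  have hc3 : Continuous fun t : ℝ => ε ^ 2 * S * t := continuous_const.mul continuous_id
  have hc4 : Continuous fun t : ℝ => ε ^ 2 * S * t + ε ^ 2 * Bj := hc3.add continuous_const
  have hmono : ∫ t in (0:ℝ)..T, |d t| ≤ ∫ t in (0:ℝ)..T, (ε ^ 2 * S * t + ε ^ 2 * Bj) := by
    refine intervalIntegral.integral_mono_on hT (hdc.abs.intervalIntegrable 0 T)
      (hc4.intervalIntegrable 0 T)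
      hdbound
  have hcomp : ∫ t in (0:ℝ)..T, (ε ^ 2 * S * t + ε ^ 2 * Bj)
      = ((1:ℝ)/2 * S) * ε ^ 2 * T ^ 2 + Bj * ε ^ 2 * T := by
    rw [intervalIntegral.integral_add
      (hc3.intervalIntegrable 0 T)
      (intervalIntegrable_const),
      intervalIntegral.integral_const_mul, integral_id,
      intervalIntegral.integral_const]
    simp [smul_eq_mul]; ring
  calc |∫ t in (0:ℝ)..T, d t| ≤ ∫ t in (0:ℝ)..T, |d t| := habs
    _ ≤ ∫ t in (0:ℝ)..T, (ε ^ 2 * S * t + ε ^ 2 * Bj) := hmono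
    _ = ((1:ℝ)/2 * S) * ε ^ 2 * T ^ 2 + Bj * ε ^ 2 * T := hcomp
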